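/- Let {wᵢ, μᵢ, Σᵢ}_{i=1}^k define an isotropic mixture (∑wᵢμᵢ = 0, ∑wᵢ(Σᵢ+μᵢμᵢᵀ) = I) with overlap φ defined as the minimum over (k−1)-dimensional subspaces S of the maximum over unit p ∈ S of pᵀ(∑ᵢwᵢΣᵢ)p. Then the mixture obtained by removing any subset of components (renormalizing weights and re-centering at the new mean) has overlap at most φ. -/

import Mathlib

open Matrix

section helpers

variable {n : ℕ}

lemma quad_add (p : Fin n → ℝ) (A B : Matrix (Fin n) (Fin n) ℝ) :
    p ⬝ᵥ (A + B) *ᵥ p = p ⬝ᵥ A *ᵥ p + p ⬝ᵥ B *ᵥ p := by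
  rw [Matrix.add_mulVec, dotProduct_add]

lemma quad_smul (c : ℝ) (p : Fin n → ℝ) (A : Matrix (Fin n) (Fin n) ℝ) :
    p ⬝ᵥ (c • A) *ᵥ p = c * (p ⬝ᵥ A *ᵥ p) := by
  rw [Matrix.smul_mulVec, dotProduct_smul, smul_eq_mul]

lemma quad_sum {ι : Type*} (p : Fin n → ℝ) (s : Finset ι) (f : ι → Matrix (Fin n) (Fin n) ℝ) :
    p ⬝ᵥ (∑ i ∈ s, f i) *ᵥ p = ∑ i ∈ s, p ⬝ᵥ (f i) *ᵥ p := by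
  classical
  induction s using Finset.cons_induction with
  | empty => simp [Matrix.zero_mulVec]
  | cons a s ha ih => rw [Finset.sum_cons, Finset.sum_cons, quad_add, ih]

lemma quad_vecMulVec (p a b : Fin n → ℝ) :
    p ⬝ᵥ (vecMulVec a b) *ᵥ p = (a ⬝ᵥ p) * (b ⬝ᵥ p) := by
  simp only [vecMulVec, mulVec, dotProduct, Matrix.of_apply, Finset.mul_sum, Finset.sum_mul]
  rw [Finset.sum_comm]
  apply Finset.sum_congr rfl; intro i _; apply Finset.sum_congr rfl; intro j _; ring

lemma sum_dot {ι : Type*} (s : Finset ι) (v : ι → (Fin n → ℝ)) (p : Fin n → ℝ) :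
    (∑ i ∈ s, v i) ⬝ᵥ p = ∑ i ∈ s, v i ⬝ᵥ p := by
  classical
  induction s using Finset.cons_induction with
  | empty => simp
  | cons a s ha ih => rw [Finset.sum_cons, Finset.sum_cons, add_dotProduct, ih]

lemma exists_sub_finrank {E : Type*} [AddCommGroup E] [Module ℝ E]
    (V : Submodule ℝ E) [FiniteDimensional ℝ V] {d : ℕ} (hd : d ≤ Module.finrank ℝ V) :
    ∃ W : Submodule ℝ E, W ≤ V ∧ Module.finrank ℝ W = d := by
  classical
  let b := Module.finBasis ℝ V
  have hli : LinearIndependent ℝ (fun i : Fin d => ((b (Fin.castLE hd i) : V) : E)) := by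
    have h1 : LinearIndependent ℝ (fun i : Fin d => b (Fin.castLE hd i)) :=
      b.linearIndependent.comp _ (Fin.castLE_injective hd)
    exact h1.map' V.subtype (Submodule.ker_subtype V)
  refine ⟨Submodule.span ℝ (Set.range fun i : Fin d => ((b (Fin.castLE hd i) : V) : E)), ?_, ?_⟩
  · rw [Submodule.span_le]; rintro x ⟨i, rfl⟩; exact (b (Fin.castLE hd i) : V).2
  · rw [finrank_span_eq_card hli, Fintype.card_fin]

end helpers


/-- Generalized overlap of a mixture with intra-component covariance matrix `Sm` and
second-moment matrix `M`: the minimum over `d`-dimensional subspaces `S` of the maximum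
over unit `p ∈ S` of `pᵀ Sm p / pᵀ M p`. -/
noncomputable def mixOverlap {n : ℕ} (Sm M : Matrix (Fin n) (Fin n) ℝ) (d : ℕ) : ℝ :=
  sInf {t : ℝ | ∃ S : Submodule ℝ (Fin n → ℝ), Module.finrank ℝ S = d ∧
    t = sSup {r : ℝ | ∃ p, p ∈ S ∧ p ⬝ᵥ p = 1 ∧ r = (p ⬝ᵥ Sm *ᵥ p) / (p ⬝ᵥ M *ᵥ p)}}

set_option maxHeartbeats 1000000 in
/-- Removing any subset of components from an isotropic mixture (renormalizing the
weights and re-centering at the induced mean) cannot increase the overlap: the induced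
mixture's overlap is at most the original overlap `φ = mixOverlap (∑ᵢ wᵢΣᵢ) I (k−1)`. -/
theorem stmt_16 {n k : ℕ} (hk : 2 ≤ k)
    (w : Fin k → ℝ) (hw : ∀ i, 0 < w i) (hwsum : ∑ i, w i = 1)
    (μ : Fin k → (Fin n → ℝ)) (S : Fin k → Matrix (Fin n) (Fin n) ℝ)
    (hS : ∀ i, (S i).PosDef)
    (hmean : ∑ i, w i • μ i = 0)
    (hiso : ∑ i, w i • (S i + vecMulVec (μ i) (μ i)) = 1)
    (hdim : Module.finrank ℝ (Submodule.span ℝ (Set.range μ)) = k - 1)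
    (T : Finset (Fin k)) (hT : T.Nonempty) :
    mixOverlap
        (∑ i ∈ T, (w i / ∑ j ∈ T, w j) • S i)
        (∑ i ∈ T, (w i / ∑ j ∈ T, w j) •
          (S i + vecMulVec (μ i - (∑ j ∈ T, w j)⁻¹ • ∑ j ∈ T, w j • μ j)
                           (μ i - (∑ j ∈ T, w j)⁻¹ • ∑ j ∈ T, w j • μ j)))
        (T.card - 1)
      ≤ mixOverlap (∑ i, w i • S i) 1 (k - 1) := by
  classical
  have hωpos : 0 < ∑ j ∈ T, w j := Finset.sum_pos (fun i _ => hw i) hT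
  set ω : ℝ := ∑ j ∈ T, w j with hωdef
  set m0 : Fin n → ℝ := ω⁻¹ • ∑ j ∈ T, w j • μ j with hm0def
  set Sm : Matrix (Fin n) (Fin n) ℝ := ∑ i, w i • S i with hSmdef
  set Sm' : Matrix (Fin n) (Fin n) ℝ := ∑ i ∈ T, (w i / ω) • S i with hSm'def
  set M' : Matrix (Fin n) (Fin n) ℝ :=
    ∑ i ∈ T, (w i / ω) • (S i + vecMulVec (μ i - m0) (μ i - m0)) with hM'def
  -- quadratic form expansions
  have hσpos : ∀ (i : Fin k) (p : Fin n → ℝ), p ≠ 0 → 0 < p ⬝ᵥ S i *ᵥ p := by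
    intro i p hp
    simpa using (hS i).dotProduct_mulVec_pos hp
  have hSmq : ∀ p : Fin n → ℝ, p ⬝ᵥ Sm *ᵥ p = ∑ i, w i * (p ⬝ᵥ S i *ᵥ p) := by
    intro p; rw [hSmdef, quad_sum]
    exact Finset.sum_congr rfl fun i _ => quad_smul _ _ _
  have hSm'q : ∀ p : Fin n → ℝ, p ⬝ᵥ Sm' *ᵥ p = ∑ i ∈ T, (w i / ω) * (p ⬝ᵥ S i *ᵥ p) := by
    intro p; rw [hSm'def, quad_sum]
    exact Finset.sum_congr rfl fun i _ => quad_smul _ _ _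
  have hM'q : ∀ p : Fin n → ℝ, p ⬝ᵥ M' *ᵥ p
      = ∑ i ∈ T, (w i / ω) * ((p ⬝ᵥ S i *ᵥ p) + ((μ i - m0) ⬝ᵥ p) ^ 2) := by
    intro p; rw [hM'def, quad_sum]
    refine Finset.sum_congr rfl fun i _ => ?_
    rw [quad_smul, quad_add, quad_vecMulVec]; ring
  have key : ∀ p : Fin n → ℝ, p ⬝ᵥ p = 1 →
      (∑ i, w i * (p ⬝ᵥ S i *ᵥ p)) + ∑ i, w i * (μ i ⬝ᵥ p) ^ 2 = 1 := by
    intro p hp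
    have h := congrArg (fun M : Matrix (Fin n) (Fin n) ℝ => p ⬝ᵥ M *ᵥ p) hiso
    simp only [Matrix.one_mulVec, hp] at h
    rw [quad_sum] at h
    rw [← h, ← Finset.sum_add_distrib]
    refine Finset.sum_congr rfl fun i _ => ?_
    rw [quad_smul, quad_add, quad_vecMulVec]; ring
  refine le_csInf ⟨sSup {r : ℝ | ∃ p, p ∈ Submodule.span ℝ (Set.range μ) ∧ p ⬝ᵥ p = 1 ∧
      r = (p ⬝ᵥ Sm *ᵥ p) / (p ⬝ᵥ (1 : Matrix (Fin n) (Fin n) ℝ) *ᵥ p)},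
    ⟨Submodule.span ℝ (Set.range μ), hdim, rfl⟩⟩ ?_
  rintro t ⟨U, hU, rfl⟩
  -- upper bound of 1 on the reference set
  have hbdd : BddAbove {r : ℝ | ∃ p, p ∈ U ∧ p ⬝ᵥ p = 1 ∧
      r = (p ⬝ᵥ Sm *ᵥ p) / (p ⬝ᵥ (1 : Matrix (Fin n) (Fin n) ℝ) *ᵥ p)} := by
    refine ⟨1, ?_⟩
    rintro r ⟨p, hpU, hp1, rfl⟩
    have hkey := key p hp1
    have h1 : (0:ℝ) ≤ ∑ i, w i * (μ i ⬝ᵥ p) ^ 2 :=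
      Finset.sum_nonneg fun i _ => mul_nonneg (hw i).le (sq_nonneg _)
    rw [Matrix.one_mulVec, hp1, div_one, hSmq]
    linarith
  have ht0 : 0 ≤ sSup {r : ℝ | ∃ p, p ∈ U ∧ p ⬝ᵥ p = 1 ∧
      r = (p ⬝ᵥ Sm *ᵥ p) / (p ⬝ᵥ (1 : Matrix (Fin n) (Fin n) ℝ) *ᵥ p)} := by
    apply Real.sSup_nonneg
    rintro r ⟨p, hpU, hp1, rfl⟩
    have hp0 : p ≠ 0 := by intro h; rw [h] at hp1; simp at hp1
    rw [Matrix.one_mulVec, hp1, div_one, hSmq]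
    exact Finset.sum_nonneg fun i _ => mul_nonneg (hw i).le (hσpos i p hp0).le
  -- the subspace of vectors orthogonal to the removed means
  let L : (Fin n → ℝ) →ₗ[ℝ] ({i : Fin k // i ∈ Tᶜ} → ℝ) :=
    LinearMap.pi fun i =>
      { toFun := fun p => μ i.1 ⬝ᵥ p
        map_add' := fun x y => dotProduct_add _ x y
        map_smul' := fun c x => by simp [dotProduct_smul] }
  have hrn : Module.finrank ℝ (LinearMap.range L) + Module.finrank ℝ (LinearMap.ker L) = n := by
    rw [LinearMap.finrank_range_add_finrank_ker, Module.finrank_fin_fun]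
  have hrle : Module.finrank ℝ (LinearMap.range L) ≤ k - T.card := by
    have h1 := Submodule.finrank_le (LinearMap.range L)
    rw [Module.finrank_pi, Fintype.card_coe, Finset.card_compl, Fintype.card_fin] at h1
    exact h1
  have hsupinf := Submodule.finrank_sup_add_finrank_inf_eq U (LinearMap.ker L)
  have hsuple : Module.finrank ℝ ↥(U ⊔ LinearMap.ker L) ≤ n := by
    have := Submodule.finrank_le (U ⊔ LinearMap.ker L)
    rwa [Module.finrank_fin_fun] at this
  have hTk : T.card ≤ k := by simpa using Finset.card_le_univ T
  have hT1 : 1 ≤ T.card := hT.card_pos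
  have hV0 : T.card - 1 ≤ Module.finrank ℝ ↥(U ⊓ LinearMap.ker L) := by omega
  obtain ⟨V', hV'le, hV'rank⟩ := exists_sub_finrank (U ⊓ LinearMap.ker L) hV0
  refine le_trans (csInf_le ?_ ⟨V', hV'rank, rfl⟩) (Real.sSup_le ?_ ht0)
  · -- bddBelow
    refine ⟨0, ?_⟩
    rintro x ⟨V, hV, rfl⟩
    apply Real.sSup_nonneg
    rintro r ⟨p, hpV, hp1, rfl⟩
    have hp0 : p ≠ 0 := by intro h; rw [h] at hp1; simp at hp1
    apply div_nonneg
    · rw [hSm'q]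
      exact Finset.sum_nonneg fun i _ =>
        mul_nonneg (div_nonneg (hw i).le hωpos.le) (hσpos i p hp0).le
    · rw [hM'q]
      exact Finset.sum_nonneg fun i _ => mul_nonneg (div_nonneg (hw i).le hωpos.le)
        (add_nonneg (hσpos i p hp0).le (sq_nonneg _))
  · -- the main bound
    rintro r ⟨p, hpV', hp1, rfl⟩
    have hp0 : p ≠ 0 := by intro h; rw [h] at hp1; simp at hp1
    have hpU : p ∈ U := (hV'le hpV').1
    have hpker : p ∈ LinearMap.ker L := (hV'le hpV').2
    have ha0 : ∀ i, i ∉ T → μ i ⬝ᵥ p = 0 := by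
      intro i hi
      have h := LinearMap.mem_ker.mp hpker
      have h2 := congrFun h ⟨i, Finset.mem_compl.mpr hi⟩
      simpa [L] using h2
    have htot : ∑ j, w j * (μ j ⬝ᵥ p) = 0 := by
      have h := congrArg (fun v : Fin n → ℝ => v ⬝ᵥ p) hmean
      simpa [sum_dot, smul_dotProduct, smul_eq_mul] using h
    have hcompl : ∑ j ∈ Tᶜ, w j * (μ j ⬝ᵥ p) = 0 :=
      Finset.sum_eq_zero fun j hj => by rw [ha0 j (Finset.mem_compl.mp hj), mul_zero]
    have hsumT : ∑ j ∈ T, w j * (μ j ⬝ᵥ p) = 0 := by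
      have h := Finset.sum_add_sum_compl T (fun j => w j * (μ j ⬝ᵥ p))
      rw [hcompl, htot] at h; linarith
    have hm0p : m0 ⬝ᵥ p = 0 := by
      rw [hm0def, smul_dotProduct, sum_dot]
      have : ∑ j ∈ T, (w j • μ j) ⬝ᵥ p = ∑ j ∈ T, w j * (μ j ⬝ᵥ p) :=
        Finset.sum_congr rfl fun j _ => by rw [smul_dotProduct, smul_eq_mul]
      rw [this, hsumT, smul_eq_mul, mul_zero]
    -- X ≤ t
    have hXle : p ⬝ᵥ Sm *ᵥ p ≤ sSup {r : ℝ | ∃ p, p ∈ U ∧ p ⬝ᵥ p = 1 ∧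
        r = (p ⬝ᵥ Sm *ᵥ p) / (p ⬝ᵥ (1 : Matrix (Fin n) (Fin n) ℝ) *ᵥ p)} := by
      have h := le_csSup hbdd (Set.mem_setOf.mpr ⟨p, hpU, hp1, rfl⟩)
      rwa [Matrix.one_mulVec, hp1, div_one] at h
    -- scalar bookkeeping
    set X : ℝ := ∑ i, w i * (p ⬝ᵥ S i *ᵥ p) with hXdef
    set s : ℝ := ∑ i ∈ Tᶜ, w i * (p ⬝ᵥ S i *ᵥ p) with hsdef
    have hs0 : 0 ≤ s :=
      Finset.sum_nonneg fun i _ => mul_nonneg (hw i).le (hσpos i p hp0).le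
    have hAT : ∑ i ∈ T, w i * (p ⬝ᵥ S i *ᵥ p) = X - s := by
      have h := Finset.sum_add_sum_compl T (fun i => w i * (p ⬝ᵥ S i *ᵥ p))
      rw [← hXdef, ← hsdef] at h; linarith
    have hkey := key p hp1
    have hsq0 : (0:ℝ) ≤ ∑ i, w i * (μ i ⬝ᵥ p) ^ 2 :=
      Finset.sum_nonneg fun i _ => mul_nonneg (hw i).le (sq_nonneg _)
    have hX1 : X ≤ 1 := by rw [hXdef]; linarith
    have hBT : ∑ i ∈ T, w i * ((p ⬝ᵥ S i *ᵥ p) + (μ i ⬝ᵥ p) ^ 2) = 1 - s := by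
      have huniv : ∑ i, w i * ((p ⬝ᵥ S i *ᵥ p) + (μ i ⬝ᵥ p) ^ 2) = 1 := by
        rw [← hkey, ← Finset.sum_add_distrib]
        exact Finset.sum_congr rfl fun i _ => by ring
      have hcompl2 : ∑ i ∈ Tᶜ, w i * ((p ⬝ᵥ S i *ᵥ p) + (μ i ⬝ᵥ p) ^ 2) = s := by
        rw [hsdef]
        exact Finset.sum_congr rfl fun i hi => by
          rw [ha0 i (Finset.mem_compl.mp hi)]; ring
      have h := Finset.sum_add_sum_compl T (fun i => w i * ((p ⬝ᵥ S i *ᵥ p) + (μ i ⬝ᵥ p) ^ 2))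
      rw [hcompl2, huniv] at h; linarith
    have hN : p ⬝ᵥ Sm' *ᵥ p = ω⁻¹ * (X - s) := by
      rw [hSm'q, ← hAT, Finset.mul_sum]
      exact Finset.sum_congr rfl fun i _ => by ring
    have hDq : p ⬝ᵥ M' *ᵥ p = ω⁻¹ * (1 - s) := by
      rw [hM'q, ← hBT, Finset.mul_sum]
      refine Finset.sum_congr rfl fun i hi => ?_
      rw [sub_dotProduct, hm0p, sub_zero]; ring
    have hs1 : 0 < 1 - s := by
      rw [← hBT]
      refine Finset.sum_pos (fun i _ => ?_) hT
      have := hσpos i p hp0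
      nlinarith [hw i, sq_nonneg (μ i ⬝ᵥ p)]
    have hDqpos : 0 < p ⬝ᵥ M' *ᵥ p := by
      rw [hDq]; positivity
    rw [div_le_iff₀ hDqpos, hN, hDq]
    rw [hSmq p, ← hXdef] at hXle
    set tv : ℝ := sSup {r : ℝ | ∃ p, p ∈ U ∧ p ⬝ᵥ p = 1 ∧
      r = (p ⬝ᵥ Sm *ᵥ p) / (p ⬝ᵥ (1 : Matrix (Fin n) (Fin n) ℝ) *ᵥ p)} with htvdef
    clear_value tv
    clear_value X s
    have hinv : 0 < ω⁻¹ := inv_pos.mpr hωpos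
    have h1 : X - s ≤ tv * (1 - s) := by
      nlinarith [mul_nonneg hs0 (sub_nonneg.mpr hX1), mul_nonneg (sub_nonneg.mpr hXle) hs1.le]
    calc ω⁻¹ * (X - s) ≤ ω⁻¹ * (tv * (1 - s)) := mul_le_mul_of_nonneg_left h1 hinv.le
      _ = tv * (ω⁻¹ * (1 - s)) := by ring
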